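/- Let w₁,…,w_M ≥ 0 and for each i let μ_i, μ_i^w, μ_i^s ∈ ℝ satisfy (μ_i − μ_i^s)(μ_i^s − μ_i^w) > 0. Define F(ω) = Σ_i w_i (ω·μ_i^s + (1−ω)·μ_i^w − μ_i)². If not all weights are zero and at least one i with w_i > 0 has μ_i^s ≠ μ_i^w, then F is a convex quadratic in ω with F′(1) < 0 whenever each term with w_i > 0 has (μ_i^s − μ_i^w)(μ_i^s − μ_i) < 0; consequently there exists ω > 1 with F(ω) < F(1). -/

import Mathlib

theorem w2s_mixture_improvement {M : ℕ}
    (w : Fin M → ℝ) (hw_nonneg : ∀ i, 0 ≤ w i)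
    (μ μw μs : Fin M → ℝ)
    (hbetween : ∀ i, (μ i - μs i) * (μs i - μw i) > 0)
    (hw_pos : ∃ i, 0 < w i)
    (hne : ∃ i, 0 < w i ∧ μs i ≠ μw i) :
    ConvexOn ℝ Set.univ
      (fun ω : ℝ => ∑ i, w i * (ω * μs i + (1 - ω) * μw i - μ i) ^ 2) ∧
    ((∀ i, 0 < w i → (μs i - μw i) * (μs i - μ i) < 0) →
      deriv (fun ω : ℝ => ∑ i, w i * (ω * μs i + (1 - ω) * μw i - μ i) ^ 2) 1 < 0 ∧
      ∃ ω : ℝ, ω > 1 ∧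
        ∑ i, w i * (ω * μs i + (1 - ω) * μw i - μ i) ^ 2
          < ∑ i, w i * (1 * μs i + (1 - 1) * μw i - μ i) ^ 2) := by
  set A : ℝ := ∑ i, w i * (μs i - μw i) ^ 2 with hA
  set D : ℝ := ∑ i, w i * ((μs i - μw i) * (μw i - μ i)) with hD
  set C : ℝ := ∑ i, w i * (μw i - μ i) ^ 2 with hC
  have hpoly : ∀ ω : ℝ,
      (∑ i, w i * (ω * μs i + (1 - ω) * μw i - μ i) ^ 2) = A * ω ^ 2 + 2 * D * ω + C := by
    intro ω
    have hterm : ∀ i ∈ Finset.univ, w i * (ω * μs i + (1 - ω) * μw i - μ i) ^ 2 =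
        (w i * (μs i - μw i) ^ 2) * ω ^ 2 +
        (w i * ((μs i - μw i) * (μw i - μ i))) * (2 * ω) +
        w i * (μw i - μ i) ^ 2 := fun i _ => by ring
    rw [Finset.sum_congr rfl hterm, Finset.sum_add_distrib, Finset.sum_add_distrib,
      ← Finset.sum_mul, ← Finset.sum_mul, hA, hD, hC]
    ring
  have hA_nonneg : 0 ≤ A := Finset.sum_nonneg fun i _ =>
    mul_nonneg (hw_nonneg i) (sq_nonneg _)
  have hA_pos : 0 < A := by
    obtain ⟨i0, hw0, hne0⟩ := hne
    have h1 : w i0 * (μs i0 - μw i0) ^ 2 ≤ A := by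
      apply Finset.single_le_sum (fun i _ => mul_nonneg (hw_nonneg i) (sq_nonneg _))
        (Finset.mem_univ i0)
    have hsub : μs i0 - μw i0 ≠ 0 := sub_ne_zero.mpr hne0
    have : 0 < w i0 * (μs i0 - μw i0) ^ 2 := by positivity
    linarith
  have hfun_eq : (fun ω : ℝ => ∑ i, w i * (ω * μs i + (1 - ω) * μw i - μ i) ^ 2)
      = fun ω : ℝ => A * ω ^ 2 + 2 * D * ω + C := funext hpoly
  constructor
  · rw [hfun_eq]
    have hsq : ConvexOn ℝ Set.univ (fun x : ℝ => A • x ^ 2) :=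
      (Even.convexOn_pow even_two).smul hA_nonneg
    have haff : ConvexOn ℝ Set.univ (fun x : ℝ => 2 * D * x + C) := by
      refine ⟨convex_univ, fun x _ y _ a b ha hb hab => le_of_eq ?_⟩
      simp only [smul_eq_mul]
      linear_combination (-C) * hab
    have := hsq.add haff
    simpa [smul_eq_mul, add_assoc, Pi.add_def] using this
  · intro hstrict
    have hAD : A + D < 0 := by
      have hADeq : A + D = ∑ i, w i * ((μs i - μw i) * (μs i - μ i)) := by
        rw [hA, hD, ← Finset.sum_add_distrib]
        exact Finset.sum_congr rfl fun i _ => by ring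
      rw [hADeq]
      obtain ⟨i0, hw0⟩ := hw_pos
      have hlt : ∑ i, w i * ((μs i - μw i) * (μs i - μ i)) < ∑ _i : Fin M, (0 : ℝ) := by
        apply Finset.sum_lt_sum
        · intro i _
          rcases lt_or_eq_of_le (hw_nonneg i) with hwi | hwi
          · exact le_of_lt (mul_neg_of_pos_of_neg hwi (hstrict i hwi))
          · rw [← hwi]; simp
        · exact ⟨i0, Finset.mem_univ i0, mul_neg_of_pos_of_neg hw0 (hstrict i0 hw0)⟩
      simpa using hlt
    constructor
    · rw [hfun_eq]
      have h1 : HasDerivAt (fun x : ℝ => x ^ 2) (2 * 1) (1 : ℝ) := by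
        simpa using hasDerivAt_pow 2 (1 : ℝ)
      have hd : HasDerivAt (fun x : ℝ => A * x ^ 2 + 2 * D * x + C)
          (A * (2 * 1) + 2 * D * 1) 1 :=
        ((h1.const_mul A).add ((hasDerivAt_id (1 : ℝ)).const_mul (2 * D))).add_const C
      rw [hd.deriv]
      nlinarith
    · have htneg : (A + D) / A < 0 := div_neg_of_neg_of_pos hAD hA_pos
      refine ⟨1 - (A + D) / A, by linarith, ?_⟩
      rw [hpoly, hpoly]
      set t : ℝ := (A + D) / A with htdef
      have ht : A * t = A + D := by
        rw [htdef]; field_simp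
      have ht2 : A * t ^ 2 = (A + D) * t := by rw [sq, ← mul_assoc, ht]
      nlinarith [mul_pos_of_neg_of_neg hAD htneg]
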